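/- Let K be a field of characteristic ≠ 2 and S = K[u,v,w]/(u²−v²w). The kernel of the S-linear map S³ → S given by (a,b,c) ↦ 2u·a − 2vw·b − v²·c contains the four elements e₁ = (vw, u, 0), e₂ = (u, v, 0), e₃ = (v², 0, 2u), e₄ = (0, v, −2w), and these four elements generate this kernel as an S-module. -/

import Mathlib

set_option synthInstance.maxHeartbeats 1000000
set_option maxHeartbeats 2000000

/-- The ideal `(u² − v²w) ⊂ K[u,v,w]` (with `X 0 = u`, `X 1 = v`, `X 2 = w`). -/
noncomputable def pinchIdeal6 (K : Type*) [Field K] : Ideal (MvPolynomial (Fin 3) K) :=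
  Ideal.span {MvPolynomial.X 0 ^ 2 - MvPolynomial.X 1 ^ 2 * MvPolynomial.X 2}

/-- `S = K[u,v,w]/(u² − v²w)`. -/
abbrev S6 (K : Type*) [Field K] := MvPolynomial (Fin 3) K ⧸ pinchIdeal6 K

noncomputable def u6 (K : Type*) [Field K] : S6 K :=
  Ideal.Quotient.mk (pinchIdeal6 K) (MvPolynomial.X 0)
noncomputable def v6 (K : Type*) [Field K] : S6 K :=
  Ideal.Quotient.mk (pinchIdeal6 K) (MvPolynomial.X 1)
noncomputable def w6 (K : Type*) [Field K] : S6 K :=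
  Ideal.Quotient.mk (pinchIdeal6 K) (MvPolynomial.X 2)

/-- The gradient map `S³ → S`, `(a,b,c) ↦ 2u·a − 2vw·b − v²·c`. -/
noncomputable def grad6 (K : Type*) [Field K] : (Fin 3 → S6 K) →ₗ[S6 K] S6 K :=
  (2 * u6 K) • (LinearMap.proj 0 : (Fin 3 → S6 K) →ₗ[S6 K] S6 K)
    - (2 * (v6 K * w6 K)) • (LinearMap.proj 1 : (Fin 3 → S6 K) →ₗ[S6 K] S6 K)
    - (v6 K ^ 2) • (LinearMap.proj 2 : (Fin 3 → S6 K) →ₗ[S6 K] S6 K)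

namespace PinchAux6

open MvPolynomial

variable (K : Type*) [Field K]

/-- the defining polynomial `u² - v²w` -/
noncomputable def f6 : MvPolynomial (Fin 3) K :=
  X 0 ^ 2 - X 1 ^ 2 * X 2

/-- the equivalence `K[u,v,w] ≃ (K[v,w])[u]` -/
noncomputable def E6 : MvPolynomial (Fin 3) K ≃ₐ[K] Polynomial (MvPolynomial (Fin 2) K) :=
  MvPolynomial.finSuccEquiv K 2

/-- the image of `f6` under `E6` -/
noncomputable def g6 : Polynomial (MvPolynomial (Fin 2) K) :=
  Polynomial.X ^ 2 - Polynomial.C (X 0 ^ 2 * X 1)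

lemma E6_X0 : E6 K (X 0) = Polynomial.X := MvPolynomial.finSuccEquiv_X_zero

lemma E6_X1 : E6 K (X 1) = Polynomial.C (X 0) := by
  have h : (1 : Fin 3) = Fin.succ 0 := rfl
  rw [h]; exact MvPolynomial.finSuccEquiv_X_succ

lemma E6_X2 : E6 K (X 2) = Polynomial.C (X 1) := by
  have h : (2 : Fin 3) = Fin.succ 1 := rfl
  rw [h]; exact MvPolynomial.finSuccEquiv_X_succ

lemma E6_f6 : E6 K (f6 K) = g6 K := by
  simp only [f6, g6, map_sub, map_pow, map_mul, E6_X0, E6_X1, E6_X2, Polynomial.C_mul,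
    Polynomial.C_pow]

lemma monic_g6 : (g6 K).Monic := Polynomial.monic_X_pow_sub_C _ (two_ne_zero)

lemma degree_g6 : (g6 K).degree = 2 := Polynomial.degree_X_pow_sub_C (by norm_num) _

/-- the embedding `K[v,w] → S`, sending `X 0 ↦ v`, `X 1 ↦ w`. -/
noncomputable def ι6 : MvPolynomial (Fin 2) K →+* S6 K :=
  (Ideal.Quotient.mk (pinchIdeal6 K)).comp
    (((E6 K).symm : Polynomial (MvPolynomial (Fin 2) K) ≃+* MvPolynomial (Fin 3) K).toRingHom.comp
      Polynomial.C)

lemma ι6_apply (p : MvPolynomial (Fin 2) K) :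
    ι6 K p = Ideal.Quotient.mk (pinchIdeal6 K) ((E6 K).symm (Polynomial.C p)) := rfl

lemma mk_symm_X :
    Ideal.Quotient.mk (pinchIdeal6 K) ((E6 K).symm Polynomial.X) = u6 K := by
  rw [← E6_X0 K, AlgEquiv.symm_apply_apply]; rfl

lemma ι6_X0 : ι6 K (X 0) = v6 K := by
  rw [ι6_apply, ← E6_X1 K, AlgEquiv.symm_apply_apply]; rfl

lemma ι6_X1 : ι6 K (X 1) = w6 K := by
  rw [ι6_apply, ← E6_X2 K, AlgEquiv.symm_apply_apply]; rfl

lemma mk_eq_zero_iff (z : MvPolynomial (Fin 3) K) :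
    Ideal.Quotient.mk (pinchIdeal6 K) z = 0 ↔ g6 K ∣ E6 K z := by
  rw [Ideal.Quotient.eq_zero_iff_mem, pinchIdeal6, Ideal.mem_span_singleton]
  rw [show (X 0 ^ 2 - X 1 ^ 2 * X 2 : MvPolynomial (Fin 3) K) = f6 K from rfl]
  constructor
  · intro h
    have := map_dvd (E6 K) h
    rwa [E6_f6] at this
  · intro h
    have := map_dvd (E6 K).symm h
    rw [← E6_f6] at this
    simpa using this

/-- the relation `u² = v²w` in `S` -/
lemma rel6 : u6 K ^ 2 = v6 K ^ 2 * w6 K := by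
  have h : Ideal.Quotient.mk (pinchIdeal6 K) (f6 K) = 0 := by
    rw [mk_eq_zero_iff, E6_f6]
  have := sub_eq_zero.mp (by simpa [f6, map_sub, map_mul, map_pow] using h)
  simpa [u6, v6, w6, map_pow, map_mul] using this

/-- key uniqueness: if `ι p + ι q · u = 0` then `p = q = 0`. -/
lemma zero6 (p q : MvPolynomial (Fin 2) K)
    (h : ι6 K p + ι6 K q * u6 K = 0) : p = 0 ∧ q = 0 := by
  have hrw : ι6 K p + ι6 K q * u6 K =
      Ideal.Quotient.mk (pinchIdeal6 K)
        ((E6 K).symm (Polynomial.C p + Polynomial.C q * Polynomial.X)) := by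
    rw [map_add, map_mul, map_add, map_mul, ι6_apply, ι6_apply, mk_symm_X]
  rw [hrw, mk_eq_zero_iff, AlgEquiv.apply_symm_apply] at h
  have hdeg : (Polynomial.C p + Polynomial.C q * Polynomial.X).degree < (g6 K).degree := by
    rw [degree_g6]
    calc (Polynomial.C p + Polynomial.C q * Polynomial.X).degree
        ≤ max (Polynomial.C p).degree (Polynomial.C q * Polynomial.X).degree :=
          Polynomial.degree_add_le _ _
      _ < 2 := by
          apply max_lt
          · exact lt_of_le_of_lt Polynomial.degree_C_le (by norm_num)
          · exact lt_of_le_of_lt (Polynomial.degree_C_mul_X_le q) (by norm_num)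
  have hz : Polynomial.C p + Polynomial.C q * Polynomial.X = 0 :=
    Polynomial.eq_zero_of_dvd_of_degree_lt h hdeg
  constructor
  · have := congrArg (fun r => Polynomial.coeff r 0) hz
    simpa using this
  · have := congrArg (fun r => Polynomial.coeff r 1) hz
    simpa using this

/-- representation: every element of `S` is `ι p + ι q · u`. -/
lemma repr6 (x : S6 K) :
    ∃ p q : MvPolynomial (Fin 2) K, x = ι6 K p + ι6 K q * u6 K := by
  obtain ⟨z, rfl⟩ := Ideal.Quotient.mk_surjective x
  set r := E6 K z %ₘ g6 K with hr
  set c0 := r.coeff 0 with hc0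
  set c1 := r.coeff 1 with hc1
  refine ⟨c0, c1, ?_⟩
  have hdeg : r.degree ≤ 1 := by
    have h := Polynomial.degree_modByMonic_lt (E6 K z) (monic_g6 K)
    rw [degree_g6] at h
    have h21 : Order.succ (1 : WithBot ℕ) = 2 := rfl
    exact Order.le_of_lt_succ (h21 ▸ h)
  have hrem : r = Polynomial.C c1 * Polynomial.X + Polynomial.C c0 :=
    Polynomial.eq_X_add_C_of_degree_le_one hdeg
  have h1 : Ideal.Quotient.mk (pinchIdeal6 K) z =
      Ideal.Quotient.mk (pinchIdeal6 K) ((E6 K).symm r) := by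
    rw [Ideal.Quotient.eq]
    have hdiff : z - (E6 K).symm r = f6 K * (E6 K).symm (E6 K z /ₘ g6 K) := by
      apply (E6 K).injective
      rw [map_sub, map_mul, AlgEquiv.apply_symm_apply, AlgEquiv.apply_symm_apply, E6_f6]
      have hmod : E6 K z %ₘ g6 K + g6 K * (E6 K z /ₘ g6 K) = E6 K z :=
        Polynomial.modByMonic_add_div _ (g6 K)
      rw [← hr] at hmod
      linear_combination -hmod
    rw [hdiff, pinchIdeal6]
    exact Ideal.mem_span_singleton.mpr ⟨_, rfl⟩
  rw [h1, hrem, map_add, map_mul, map_add, map_mul, ι6_apply, ι6_apply, mk_symm_X]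
  ring

lemma grad6_apply (x : Fin 3 → S6 K) :
    grad6 K x = 2 * u6 K * x 0 - 2 * (v6 K * w6 K) * x 1 - v6 K ^ 2 * x 2 := by
  simp [grad6, smul_eq_mul]

lemma two_ne_zero6 (h2 : (2 : K) ≠ 0) : (2 : MvPolynomial (Fin 2) K) ≠ 0 := by
  intro h
  have h' := congrArg (MvPolynomial.eval (fun _ => (1 : K))) h
  simp at h'
  exact h2 h'

lemma X0_prime : Prime (X 0 : MvPolynomial (Fin 2) K) := by
  rw [← MulEquiv.prime_iff (MvPolynomial.finSuccEquiv K 1).toRingEquiv.toMulEquiv]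
  have h : ((MvPolynomial.finSuccEquiv K 1).toRingEquiv.toMulEquiv)
      (X 0 : MvPolynomial (Fin 2) K) = Polynomial.X :=
    MvPolynomial.finSuccEquiv_X_zero
  rw [h]
  exact Polynomial.prime_X

lemma X0_not_dvd (h2 : (2 : K) ≠ 0) :
    ¬ (X 0 : MvPolynomial (Fin 2) K) ∣ 2 * X 1 := by
  rintro ⟨t, ht⟩
  have h' := congrArg (MvPolynomial.eval (fun i => if i = 0 then (0 : K) else 1)) ht
  simp at h'
  exact h2 h'

end PinchAux6

open PinchAux6 MvPolynomial in
/-- For `S = K[u,v,w]/(u²−v²w)` with `char K ≠ 2`, the kernel of the `S`-linear map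
`S³ → S`, `(a,b,c) ↦ 2u·a − 2vw·b − v²·c`, contains
`e₁ = (vw, u, 0)`, `e₂ = (u, v, 0)`, `e₃ = (v², 0, 2u)`, `e₄ = (0, v, −2w)`,
and these four elements generate the kernel as an `S`-module (i.e. the kernel equals
their span). -/
theorem stmt_6 (K : Type*) [Field K] (h2 : (2 : K) ≠ 0) :
    LinearMap.ker (grad6 K) =
      Submodule.span (S6 K)
        {![v6 K * w6 K, u6 K, 0], ![u6 K, v6 K, 0],
          ![v6 K ^ 2, 0, 2 * u6 K], ![0, v6 K, -(2 * w6 K)]} := by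
  have rel := rel6 K
  apply le_antisymm
  · -- hard direction: ker ⊆ span
    intro x hx
    rw [LinearMap.mem_ker, grad6_apply] at hx
    obtain ⟨a0, a1, ha⟩ := repr6 K (x 0)
    obtain ⟨b0, b1, hb⟩ := repr6 K (x 1)
    obtain ⟨c0, c1, hc⟩ := repr6 K (x 2)
    have hkey : ι6 K (2 * (X 0 ^ 2 * X 1) * a1 - 2 * (X 0 * X 1) * b0 - X 0 ^ 2 * c0)
        + ι6 K (2 * a0 - 2 * (X 0 * X 1) * b1 - X 0 ^ 2 * c1) * u6 K = 0 := by
      simp only [map_sub, map_mul, map_pow, map_add, map_ofNat, ι6_X0, ι6_X1]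
      linear_combination hx - (2 * u6 K) * ha + (2 * (v6 K * w6 K)) * hb
        + (v6 K ^ 2) * hc - (2 * ι6 K a1) * rel
    obtain ⟨hP0, hQ0⟩ := zero6 K _ _ hkey
    -- analyse the two equations in K[v,w]
    have hX0 : (X 0 : MvPolynomial (Fin 2) K) ≠ 0 := MvPolynomial.X_ne_zero 0
    have hcan : 2 * X 1 * b0 = X 0 * (2 * X 1 * a1 - c0) := by
      have h1 : (X 0 : MvPolynomial (Fin 2) K)
          * (2 * X 1 * b0 - X 0 * (2 * X 1 * a1 - c0)) = 0 := by
        linear_combination -hP0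
      have h3 := (mul_eq_zero.mp h1).resolve_left hX0
      linear_combination h3
    have hdvd : (X 0 : MvPolynomial (Fin 2) K) ∣ b0 := by
      rcases (X0_prime K).2.2 (2 * X 1) b0 ⟨_, hcan⟩ with h | h
      · exact absurd h (X0_not_dvd K h2)
      · exact h
    obtain ⟨b0', hb0'⟩ := hdvd
    have hc0 : c0 = 2 * X 1 * a1 - 2 * X 1 * b0' := by
      have h1 : (X 0 : MvPolynomial (Fin 2) K)
          * (2 * X 1 * a1 - 2 * X 1 * b0' - c0) = 0 := by
        linear_combination 2 * X 1 * hb0' - hcan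
      have h3 := (mul_eq_zero.mp h1).resolve_left hX0
      linear_combination -h3
    have hc1 : c1 = 2 * (MvPolynomial.C (2⁻¹ : K) * c1) := by
      have hC2 : (2 : MvPolynomial (Fin 2) K) = MvPolynomial.C (2 : K) :=
        (map_ofNat (MvPolynomial.C : K →+* MvPolynomial (Fin 2) K) 2).symm
      rw [hC2, ← mul_assoc, ← MvPolynomial.C_mul, mul_inv_cancel₀ h2]
      simp
    have ha0 : a0 = X 0 * X 1 * b1 + X 0 ^ 2 * (MvPolynomial.C (2⁻¹ : K) * c1) := by
      have h2R : (2 : MvPolynomial (Fin 2) K) ≠ 0 := two_ne_zero6 K h2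
      apply mul_left_cancel₀ h2R
      linear_combination hQ0 + (X 0 ^ 2) * hc1
    -- push the equations into S
    have hιa0 := congrArg (ι6 K) ha0
    simp only [map_add, map_mul, map_pow, ι6_X0, ι6_X1] at hιa0
    have hιb0 := congrArg (ι6 K) hb0'
    simp only [map_mul, ι6_X0] at hιb0
    have hιc0 := congrArg (ι6 K) hc0
    simp only [map_sub, map_mul, map_ofNat, ι6_X1] at hιc0
    have hγc1 := congrArg (ι6 K) hc1
    simp only [map_mul, map_ofNat] at hγc1
    -- exhibit x as an explicit combination of the four generators
    have hxeq : x = ι6 K b1 • ![v6 K * w6 K, u6 K, 0]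
        + ι6 K a1 • ![u6 K, v6 K, 0]
        + ι6 K (MvPolynomial.C (2⁻¹ : K) * c1) • ![v6 K ^ 2, 0, 2 * u6 K]
        + ι6 K (b0' - a1) • ![0, v6 K, -(2 * w6 K)] := by
      funext i
      fin_cases i <;>
        simp only [Fin.isValue, Fin.reduceFinMk, Pi.add_apply, Pi.smul_apply,
          Matrix.cons_val_zero, Matrix.cons_val_one, Matrix.cons_val_two,
          Matrix.tail_cons, Matrix.head_cons, smul_eq_mul, mul_zero, add_zero, zero_add,
          map_sub, map_mul]
      · show x 0 = _
        linear_combination ha + hιa0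
      · show x 1 = _
        linear_combination hb + hιb0
      · show x 2 = _
        linear_combination hc + hιc0 + u6 K * hγc1
    rw [hxeq]
    refine Submodule.add_mem _ (Submodule.add_mem _ (Submodule.add_mem _ ?_ ?_) ?_) ?_ <;>
      exact Submodule.smul_mem _ _ (Submodule.subset_span (by simp))
  · -- easy direction: generators are in the kernel
    rw [Submodule.span_le]
    intro y hy
    simp only [Set.mem_insert_iff, Set.mem_singleton_iff] at hy
    rcases hy with rfl | rfl | rfl | rfl <;>
      · rw [SetLike.mem_coe, LinearMap.mem_ker, grad6_apply]
        simp only [Matrix.cons_val_zero, Matrix.cons_val_one, Matrix.head_cons,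
          Matrix.cons_val_two, Matrix.tail_cons]
        first
          | ring1
          | linear_combination (2 : S6 K) * rel
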